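/- Suppose n and k are positive integers with 2 ≤ k ≤ e^8 n^{1/3}. Then the minimax risk for the class F_k satisfies R_n(F_k) ≥ (1/(8 e^{12})) · sqrt(k/n). -/

import Mathlib

open Finset

/-- The class `F_k` of non-increasing probability densities on `{1, …, k}`,
represented as functions `ℕ → ℝ` vanishing outside of `{1, …, k}`. -/
def Fk (k : ℕ) : Set (ℕ → ℝ) :=
  {f | (∀ x, 0 ≤ f x) ∧ (∀ x, x ∉ Finset.Icc 1 k → f x = 0) ∧
    (∑ x ∈ Finset.Icc 1 k, f x = 1) ∧
    (∀ x, 1 ≤ x → x + 1 ≤ k → f (x + 1) ≤ f x)}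

/-- Total variation distance between two functions on `{1, …, k}`:
`TV(g, f) = (1/2) ∑_{x=1}^{k} |g x - f x|`. -/
noncomputable def TVk (k : ℕ) (g f : ℕ → ℝ) : ℝ :=
  (∑ x ∈ Finset.Icc 1 k, |g x - f x|) / 2

/-- The risk of the density estimate `φ` (a map taking the `n` sample points to a
function on `{1, …, k}`) over the class `F`: the worst-case, over `f ∈ F`, expected
total variation distance between the estimate and `f`, the expectation being over
`n` i.i.d. samples drawn from the density `f`. -/
noncomputable def risk (n k : ℕ) (φ : (Fin n → ℕ) → ℕ → ℝ) (F : Set (ℕ → ℝ)) : ℝ :=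
  ⨆ f ∈ F, ∑ x ∈ Fintype.piFinset (fun _ : Fin n => Finset.Icc 1 k),
    (∏ i, f (x i)) * TVk k (φ x) f

/-- The minimax risk `R_n(F)`: the infimum of the risk over all density estimates. -/
noncomputable def minimaxRisk (n k : ℕ) (F : Set (ℕ → ℝ)) : ℝ :=
  ⨅ φ : (Fin n → ℕ) → ℕ → ℝ, risk n k φ F


namespace Stmt19

/-- pairing sum helper -/
lemma sum_pair (g : ℕ → ℝ) (M : ℕ) :
    ∑ x ∈ Icc 1 (2*M), g x = ∑ j ∈ range M, (g (2*j+1) + g (2*j+2)) := by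
  induction M with
  | zero => simp
  | succ M ih =>
      have h1 : 2*(M+1) = (2*M+1)+1 := by ring
      rw [h1, Finset.sum_Icc_succ_top (by omega), Finset.sum_Icc_succ_top (by omega), ih,
        Finset.sum_range_succ]
      ring

lemma sum_two_id (k : ℕ) : ∑ x ∈ Icc 1 k, (2*(x:ℝ)) = (k:ℝ)*((k:ℝ)+1) := by
  induction k with
  | zero => simp
  | succ k ih =>
      rw [Finset.sum_Icc_succ_top (by omega), ih]
      push_cast; ring

lemma sqrt_prod {ι : Type*} (s : Finset ι) (f : ι → ℝ) (hf : ∀ i ∈ s, 0 ≤ f i) :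
    Real.sqrt (∏ i ∈ s, f i) = ∏ i ∈ s, Real.sqrt (f i) := by
  induction s using Finset.cons_induction with
  | empty => simp
  | cons a s ha ih =>
      rw [Finset.prod_cons, Finset.prod_cons, Real.sqrt_mul (hf a (Finset.mem_cons_self a s)),
        ih (fun i hi => hf i (Finset.mem_cons_of_mem hi))]

lemma sqrt_mul_le_half (a b : ℝ) (ha : 0 ≤ a) (hb : 0 ≤ b) :
    Real.sqrt (a*b) ≤ (a+b)/2 := by
  nlinarith [Real.sq_sqrt (mul_nonneg ha hb), Real.sqrt_nonneg (a*b), sq_nonneg (a-b),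
    sq_nonneg (Real.sqrt (a*b) - (a+b)/2)]

lemma min_eq_half (a b : ℝ) : min a b = (a + b)/2 - |a-b|/2 := by
  rcases le_total a b with h | h
  · rw [min_eq_left h, abs_of_nonpos (by linarith)]; ring
  · rw [min_eq_right h, abs_of_nonneg (by linarith)]; ring

lemma sqrt_lb (A e : ℝ) (he : 0 ≤ e) (hA : e ≤ A) : A - e^2/A ≤ Real.sqrt (A^2 - e^2) := by
  rcases (le_trans he hA).lt_or_eq with hA0 | hA0
  · have h1 : 0 ≤ A - e^2/A := by
      rw [sub_nonneg, div_le_iff₀ hA0]; nlinarith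
    have h2 : (0:ℝ) ≤ A^2 - e^2 := by nlinarith
    apply (Real.le_sqrt h1 h2).mpr
    have h3 : (A - e^2/A)^2 = A^2 - 2*e^2 + (e^2/A)^2 := by
      field_simp
      ring
    have h4 : (e^2/A)^2 ≤ e^2 := by
      rw [div_pow, div_le_iff₀ (by positivity)]
      nlinarith
    nlinarith
  · have hA' : A = 0 := hA0.symm
    have he' : e = 0 := le_antisymm (hA' ▸ hA) he
    simp [hA', he']

section Construction

variable (k m : ℕ) (ε : ℝ)

/-- base density: linear decreasing with gap `2ε`. -/
noncomputable def f0 (x : ℕ) : ℝ := 1/(k:ℝ) + ((k:ℝ) + 1 - 2*(x:ℝ)) * ε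

/-- the perturbation: `+ετ_j` at `2j+1`, `-ετ_j` at `2j+2`. -/
noncomputable def fpert (τ : Fin m → ℝ) (x : ℕ) : ℝ :=
  if h : 1 ≤ x ∧ x ≤ 2*m then
    (if x % 2 = 1 then ε else -ε) * τ ⟨(x-1)/2, by omega⟩
  else 0

/-- the perturbed density. -/
noncomputable def ftau (τ : Fin m → ℝ) (x : ℕ) : ℝ :=
  if 1 ≤ x ∧ x ≤ k then f0 k ε x + fpert m ε τ x else 0

variable {k m ε}
variable {τ : Fin m → ℝ}

lemma fpert_odd (j : Fin m) : fpert m ε τ (2*(j:ℕ)+1) = ε * τ j := by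
  have h : 1 ≤ 2*(j:ℕ)+1 ∧ 2*(j:ℕ)+1 ≤ 2*m := by have := j.2; omega
  rw [fpert, dif_pos h, if_pos (by omega)]
  exact congrArg (fun t => ε * t) (congrArg τ (Fin.ext (by show (2*(j:ℕ)+1-1)/2 = (j:ℕ); omega)))

lemma fpert_even (j : Fin m) : fpert m ε τ (2*(j:ℕ)+2) = -(ε * τ j) := by
  have h : 1 ≤ 2*(j:ℕ)+2 ∧ 2*(j:ℕ)+2 ≤ 2*m := by have := j.2; omega
  rw [fpert, dif_pos h, if_neg (by omega), neg_mul]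
  exact congrArg (fun t => -(ε * t)) (congrArg τ (Fin.ext (by show (2*(j:ℕ)+2-1)/2 = (j:ℕ); omega)))

lemma abs_fpert (hτ : ∀ i, τ i = 1 ∨ τ i = -1) (hε : 0 ≤ ε) (x : ℕ) :
    |fpert m ε τ x| ≤ ε := by
  rw [fpert]
  split_ifs with h h2
  · rw [abs_mul]
    rcases hτ ⟨(x-1)/2, by omega⟩ with h3 | h3 <;>
      simp [h3, abs_of_nonneg hε]
  · rw [abs_mul]
    rcases hτ ⟨(x-1)/2, by omega⟩ with h3 | h3 <;>
      simp [h3, abs_of_nonneg hε]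
  · simpa using hε

lemma sum_f0 (hk : 1 ≤ k) : ∑ x ∈ Icc 1 k, f0 k ε x = 1 := by
  have hc : ∑ x ∈ Icc 1 k, ((k:ℝ) + 1 - 2*(x:ℝ)) = 0 := by
    rw [Finset.sum_sub_distrib, sum_two_id, Finset.sum_const, Nat.card_Icc]
    simp
    ring
  simp only [f0]
  rw [Finset.sum_add_distrib, ← Finset.sum_mul, hc, zero_mul, add_zero, Finset.sum_const,
    Nat.card_Icc]
  simp
  exact mul_inv_cancel₀ (Nat.cast_ne_zero.mpr (by omega))

lemma fpert_zero_of_gt (x : ℕ) (hx : 2*m < x) : fpert m ε τ x = 0 := by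
  rw [fpert, dif_neg (by omega)]

lemma sum_fpert (h1 : 2*m ≤ k) (h2 : k ≤ 2*m+1) :
    ∑ x ∈ Icc 1 k, fpert m ε τ x = 0 := by
  have key : ∑ x ∈ Icc 1 (2*m), fpert m ε τ x = 0 := by
    rw [sum_pair]
    apply Finset.sum_eq_zero
    intro j hj
    rw [Finset.mem_range] at hj
    have e1 := fpert_odd (τ := τ) (ε := ε) ⟨j, hj⟩
    have e2 := fpert_even (τ := τ) (ε := ε) ⟨j, hj⟩
    simp only [Fin.val_mk] at e1 e2
    rw [e1, e2]; ring
  rcases eq_or_lt_of_le h1 with h | h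
  · rw [← h]; exact key
  · have hk : k = 2*m+1 := by omega
    rw [hk, Finset.sum_Icc_succ_top (by omega), key,
      fpert_zero_of_gt _ (by omega), add_zero]

lemma sum_ftau (h1 : 2*m ≤ k) (h2 : k ≤ 2*m+1) (hk : 1 ≤ k) :
    ∑ x ∈ Icc 1 k, ftau k m ε τ x = 1 := by
  have : ∀ x ∈ Icc 1 k, ftau k m ε τ x = f0 k ε x + fpert m ε τ x := by
    intro x hx
    rw [Finset.mem_Icc] at hx
    rw [ftau, if_pos hx]
  rw [Finset.sum_congr rfl this, Finset.sum_add_distrib, sum_f0 hk, sum_fpert h1 h2, add_zero]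

lemma ftau_lb (hτ : ∀ i, τ i = 1 ∨ τ i = -1) (hε : 0 ≤ ε)
    (hε1 : (k:ℝ)^2 * ε ≤ 4/5) (hk : 1 ≤ k) (x : ℕ) (hx1 : 1 ≤ x) (hx2 : x ≤ k) :
    1/(5*(k:ℝ)) ≤ ftau k m ε τ x := by
  have hk0 : (0:ℝ) < k := by exact_mod_cast hk
  have hp : -ε ≤ fpert m ε τ x := neg_le_of_abs_le (abs_fpert hτ hε x)
  have hxr : (x:ℝ) ≤ k := by exact_mod_cast hx2
  have hf0 : 1/(k:ℝ) - ((k:ℝ)-1)*ε ≤ f0 k ε x := by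
    rw [f0]
    have : (1:ℝ) - (k:ℝ) ≤ (k:ℝ) + 1 - 2*(x:ℝ) := by linarith
    nlinarith
  rw [ftau, if_pos ⟨hx1, hx2⟩]
  have hke : (k:ℝ)*ε ≤ 4/(5*(k:ℝ)) := by
    rw [le_div_iff₀ (by positivity)]
    nlinarith
  have : 1/(k:ℝ) - (k:ℝ)*ε ≤ f0 k ε x + fpert m ε τ x := by nlinarith
  calc 1/(5*(k:ℝ)) = 1/(k:ℝ) - 4/(5*(k:ℝ)) := by field_simp; ring
    _ ≤ 1/(k:ℝ) - (k:ℝ)*ε := by linarith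
    _ ≤ _ := this

lemma ftau_nonneg (hτ : ∀ i, τ i = 1 ∨ τ i = -1) (hε : 0 ≤ ε)
    (hε1 : (k:ℝ)^2 * ε ≤ 4/5) (hk : 1 ≤ k) (x : ℕ) : 0 ≤ ftau k m ε τ x := by
  by_cases h : 1 ≤ x ∧ x ≤ k
  · have := ftau_lb hτ hε hε1 hk x h.1 h.2
    have hk0 : (0:ℝ) < k := by exact_mod_cast hk
    have : (0:ℝ) < 1/(5*(k:ℝ)) := by positivity
    linarith [ftau_lb hτ hε hε1 hk x h.1 h.2]
  · rw [ftau, if_neg h]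

lemma ftau_mem (hτ : ∀ i, τ i = 1 ∨ τ i = -1) (hε : 0 ≤ ε)
    (hε1 : (k:ℝ)^2 * ε ≤ 4/5) (hk : 1 ≤ k) (h1 : 2*m ≤ k) (h2 : k ≤ 2*m+1) :
    ftau k m ε τ ∈ Fk k := by
  refine ⟨ftau_nonneg hτ hε hε1 hk, ?_, sum_ftau h1 h2 hk, ?_⟩
  · intro x hx
    rw [Finset.mem_Icc] at hx
    rw [ftau, if_neg hx]
  · intro x hx1 hx2
    rw [ftau, if_pos ⟨by omega, hx2⟩, ftau, if_pos ⟨hx1, by omega⟩]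
    have g1 : f0 k ε (x+1) = f0 k ε x - 2*ε := by
      rw [f0, f0]; push_cast; ring
    have p1 : -ε ≤ fpert m ε τ x := neg_le_of_abs_le (abs_fpert hτ hε x)
    have p2 : fpert m ε τ (x+1) ≤ ε := le_of_abs_le (abs_fpert hτ hε (x+1))
    linarith

/-- the estimator-induced test for bit `j`. -/
noncomputable def tst (e : ℝ) (g : ℕ → ℝ) (x : ℕ) : ℝ :=
  if 2*e ≤ g (2*x+1) - g (2*x+2) then 1 else -1

/-- indicator that the test disagrees with the true bit value `t`. -/
noncomputable def err (e : ℝ) (g : ℕ → ℝ) (t : ℝ) (x : ℕ) : ℝ :=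
  if tst e g x = t then 0 else 1

variable (k m) in
lemma ftau_pair (j : Fin m) (h1 : 2*m ≤ k) :
    ftau k m ε τ (2*(j:ℕ)+1) - ftau k m ε τ (2*(j:ℕ)+2) = 2*ε + 2*ε*τ j := by
  have hj := j.2
  rw [ftau, if_pos ⟨by omega, by omega⟩, ftau, if_pos ⟨by omega, by omega⟩,
    fpert_odd, fpert_even, f0, f0]
  push_cast
  ring

lemma err_nonneg (g : ℕ → ℝ) (t : ℝ) (x : ℕ) : 0 ≤ err ε g t x := by
  rw [err]; split_ifs <;> norm_num

lemma err_le_one (g : ℕ → ℝ) (t : ℝ) (x : ℕ) : err ε g t x ≤ 1 := by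
  rw [err]; split_ifs <;> norm_num

variable (k m) in
lemma tv_lb (hτ : ∀ i, τ i = 1 ∨ τ i = -1) (hε : 0 ≤ ε) (h1 : 2*m ≤ k) (g : ℕ → ℝ) :
    ε * ∑ j : Fin m, err ε g (τ j) (j:ℕ) ≤ TVk k g (ftau k m ε τ) := by
  have key : ∀ j : Fin m,
      2*ε * err ε g (τ j) (j:ℕ) ≤
        |g (2*(j:ℕ)+1) - ftau k m ε τ (2*(j:ℕ)+1)| +
        |g (2*(j:ℕ)+2) - ftau k m ε τ (2*(j:ℕ)+2)| := by
    intro j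
    have hpair := ftau_pair k m (τ := τ) (ε := ε) j h1
    have habs : |(g (2*(j:ℕ)+1) - ftau k m ε τ (2*(j:ℕ)+1)) -
        (g (2*(j:ℕ)+2) - ftau k m ε τ (2*(j:ℕ)+2))| ≤
        |g (2*(j:ℕ)+1) - ftau k m ε τ (2*(j:ℕ)+1)| +
        |g (2*(j:ℕ)+2) - ftau k m ε τ (2*(j:ℕ)+2)| := abs_sub _ _
    rw [err]
    split_ifs with h
    · have := abs_nonneg (g (2*(j:ℕ)+1) - ftau k m ε τ (2*(j:ℕ)+1))
      have := abs_nonneg (g (2*(j:ℕ)+2) - ftau k m ε τ (2*(j:ℕ)+2))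
      nlinarith
    · -- test disagrees with τ j
      rcases hτ j with ht | ht
      · -- τ j = 1, so tst = -1, so g-gap < 2ε, f-gap = 4ε
        have hts : ¬ (2*ε ≤ g (2*(j:ℕ)+1) - g (2*(j:ℕ)+2)) := by
          intro hc
          apply h
          rw [tst, if_pos hc, ht]
        push_neg at hts
        rw [ht] at hpair
        rw [mul_one]
        have : 2*ε ≤ |(g (2*(j:ℕ)+1) - ftau k m ε τ (2*(j:ℕ)+1)) -
            (g (2*(j:ℕ)+2) - ftau k m ε τ (2*(j:ℕ)+2))| := by
          rw [abs_le'] at *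
          rw [le_abs]
          right
          nlinarith
        linarith
      · -- τ j = -1, so tst = 1, so g-gap ≥ 2ε, f-gap = 0
        have hts : 2*ε ≤ g (2*(j:ℕ)+1) - g (2*(j:ℕ)+2) := by
          by_contra hc
          apply h
          rw [tst, if_neg hc, ht]
        rw [ht] at hpair
        rw [mul_one]
        have : 2*ε ≤ |(g (2*(j:ℕ)+1) - ftau k m ε τ (2*(j:ℕ)+1)) -
            (g (2*(j:ℕ)+2) - ftau k m ε τ (2*(j:ℕ)+2))| := by
          rw [le_abs]
          left
          nlinarith
        linarith
  have step1 : ∑ x ∈ Icc 1 (2*m), |g x - ftau k m ε τ x| ≤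
      ∑ x ∈ Icc 1 k, |g x - ftau k m ε τ x| := by
    apply Finset.sum_le_sum_of_subset_of_nonneg
    · apply Finset.Icc_subset_Icc_right h1
    · intro x _ _; exact abs_nonneg _
  have step2 : ∑ j : Fin m, 2*ε* err ε g (τ j) (j:ℕ) ≤
      ∑ x ∈ Icc 1 (2*m), |g x - ftau k m ε τ x| := by
    rw [sum_pair]
    rw [← Fin.sum_univ_eq_sum_range (fun j => |g (2*j+1) - ftau k m ε τ (2*j+1)| +
      |g (2*j+2) - ftau k m ε τ (2*j+2)|) m]
    exact Finset.sum_le_sum (fun j _ => key j)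
  rw [TVk, le_div_iff₀ (by norm_num : (0:ℝ) < 2)]
  calc ε * (∑ j : Fin m, err ε g (τ j) (j:ℕ)) * 2
      = ∑ j : Fin m, 2*ε*err ε g (τ j) (j:ℕ) := by
        rw [mul_comm, ← mul_assoc, Finset.mul_sum]
    _ ≤ _ := le_trans step2 step1

lemma f0_lb (hε : 0 ≤ ε) (hε1 : (k:ℝ)^2 * ε ≤ 4/5) (hε2 : (k:ℝ) * ε ≤ 1/5) (hk : 1 ≤ k)
    (x : ℕ) (hx1 : 1 ≤ x) (hx2 : x ≤ k) : 1/(5*(k:ℝ)) ≤ f0 k ε x ∧ ε ≤ f0 k ε x := by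
  have hk0 : (0:ℝ) < k := by exact_mod_cast hk
  have hxr : (x:ℝ) ≤ k := by exact_mod_cast hx2
  have hf0 : 1/(k:ℝ) - (k:ℝ)*ε ≤ f0 k ε x := by
    rw [f0]
    have : (1:ℝ) - (k:ℝ) ≤ (k:ℝ) + 1 - 2*(x:ℝ) := by linarith
    nlinarith
  have hke : (k:ℝ)*ε ≤ 4/(5*(k:ℝ)) := by
    rw [le_div_iff₀ (by positivity)]
    nlinarith
  constructor
  · calc 1/(5*(k:ℝ)) = 1/(k:ℝ) - 4/(5*(k:ℝ)) := by field_simp; ring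
      _ ≤ 1/(k:ℝ) - (k:ℝ)*ε := by linarith
      _ ≤ _ := hf0
  · have h5 : ε ≤ 1/(5*(k:ℝ)) := by
      rw [le_div_iff₀ (by positivity)]
      nlinarith
    calc ε ≤ 1/(5*(k:ℝ)) := h5
      _ = 1/(k:ℝ) - 4/(5*(k:ℝ)) := by field_simp; ring
      _ ≤ 1/(k:ℝ) - (k:ℝ)*ε := by linarith
      _ ≤ _ := hf0

lemma flip_pm (hτ : ∀ i, τ i = 1 ∨ τ i = -1) (j : Fin m) :
    ∀ i, Function.update τ j (-(τ j)) i = 1 ∨ Function.update τ j (-(τ j)) i = -1 := by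
  intro i
  rcases eq_or_ne i j with h | h
  · subst h
    rw [Function.update_self]
    rcases hτ i with h2 | h2 <;> simp [h2]
  · rw [Function.update_of_ne h]
    exact hτ i

lemma ftau_flip_eq (j : Fin m) (y : ℕ) (hy : y ≠ 2*(j:ℕ)+1) (hy2 : y ≠ 2*(j:ℕ)+2) :
    ftau k m ε (Function.update τ j (-(τ j))) y = ftau k m ε τ y := by
  rw [ftau, ftau]
  split_ifs with h
  · congr 1
    rw [fpert, fpert]
    split_ifs with h2 h3
    · congr 1
      apply Function.update_of_ne
      intro hc
      have h4 : ((⟨(y-1)/2, by omega⟩ : Fin m) : ℕ) = (j:ℕ) := by rw [hc]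
      simp only [Fin.val_mk] at h4
      omega
    · congr 1
      apply Function.update_of_ne
      intro hc
      have h4 : ((⟨(y-1)/2, by omega⟩ : Fin m) : ℕ) = (j:ℕ) := by rw [hc]
      simp only [Fin.val_mk] at h4
      omega
    · rfl
  · rfl

/-- the Bhattacharyya coefficient bound for a single bit flip -/
lemma rho_bound (hτ : ∀ i, τ i = 1 ∨ τ i = -1) (hε : 0 ≤ ε)
    (hε1 : (k:ℝ)^2 * ε ≤ 4/5) (hε2 : (k:ℝ) * ε ≤ 1/5) (hk : 1 ≤ k) (h1 : 2*m ≤ k) (h2 : k ≤ 2*m+1)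
    (j : Fin m) :
    1 - 10*(k:ℝ)*ε^2 ≤
      ∑ y ∈ Icc 1 k, Real.sqrt (ftau k m ε τ y * ftau k m ε (Function.update τ j (-(τ j))) y)
    ∧ ∑ y ∈ Icc 1 k, Real.sqrt (ftau k m ε τ y * ftau k m ε (Function.update τ j (-(τ j))) y) ≤ 1 := by
  set σ := Function.update τ j (-(τ j)) with hσ
  have hτσ := flip_pm hτ j
  have hj := j.2
  have hk0 : (0:ℝ) < k := by exact_mod_cast hk
  set y1 := 2*(j:ℕ)+1
  set y2 := 2*(j:ℕ)+2
  have hy1 : y1 ∈ Icc 1 k := by rw [Finset.mem_Icc]; omega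
  have hy2 : y2 ∈ Icc 1 k := by rw [Finset.mem_Icc]; omega
  have hne : y1 ≠ y2 := by omega
  have hy2' : y2 ∈ (Icc 1 k).erase y1 := Finset.mem_erase.mpr ⟨fun h => hne h.symm, hy2⟩
  -- decompose any sum over Icc 1 k
  have decomp : ∀ h : ℕ → ℝ, ∑ y ∈ Icc 1 k, h y
      = ∑ y ∈ ((Icc 1 k).erase y1).erase y2, h y + h y2 + h y1 := by
    intro h
    rw [Finset.sum_erase_add _ _ hy2', Finset.sum_erase_add _ _ hy1]
  -- values at y1 y2
  have hfty1 : ftau k m ε τ y1 = f0 k ε y1 + ε * τ j := by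
    rw [ftau, if_pos ⟨by omega, by omega⟩, fpert_odd]
  have hfty2 : ftau k m ε τ y2 = f0 k ε y2 - ε * τ j := by
    rw [ftau, if_pos ⟨by omega, by omega⟩, fpert_even]; ring
  have hfsy1 : ftau k m ε σ y1 = f0 k ε y1 - ε * τ j := by
    rw [ftau, if_pos ⟨by omega, by omega⟩, fpert_odd, hσ, Function.update_self]; ring
  have hfsy2 : ftau k m ε σ y2 = f0 k ε y2 + ε * τ j := by
    rw [ftau, if_pos ⟨by omega, by omega⟩, fpert_even, hσ, Function.update_self]; ring
  have hsq : (ε * τ j)^2 = ε^2 := by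
    rcases hτ j with h | h <;> rw [h] <;> ring
  have hA := f0_lb (k := k) (ε := ε) hε hε1 hε2 hk y1 (by omega) (by omega)
  have hB := f0_lb (k := k) (ε := ε) hε hε1 hε2 hk y2 (by omega) (by omega)
  -- the sqrt terms at y1, y2
  have sqrt_term : ∀ A : ℝ, 1/(5*(k:ℝ)) ≤ A → ε ≤ A →
      A - 5*(k:ℝ)*ε^2 ≤ Real.sqrt ((A + ε*τ j) * (A - ε*τ j)) ∧
      Real.sqrt ((A + ε*τ j) * (A - ε*τ j)) ≤ A := by
    intro A h5 hεA
    have hA0 : 0 < A := lt_of_lt_of_le (by positivity) h5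
    have hprod : (A + ε*τ j) * (A - ε*τ j) = A^2 - ε^2 := by
      have : (A + ε*τ j) * (A - ε*τ j) = A^2 - (ε*τ j)^2 := by ring
      rw [this, hsq]
    constructor
    · rw [hprod]
      have lb := sqrt_lb A ε hε hεA
      have : ε^2/A ≤ 5*(k:ℝ)*ε^2 := by
        rw [div_le_iff₀ hA0]
        calc ε^2 = ε^2 * (5*(k:ℝ)) * (1/(5*(k:ℝ))) := by field_simp
          _ ≤ ε^2 * (5*(k:ℝ)) * A := by
              apply mul_le_mul_of_nonneg_left h5 (by positivity)
          _ = 5*(k:ℝ)*ε^2 * A := by ring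
      linarith
    · rw [hprod]
      calc Real.sqrt (A^2 - ε^2) ≤ Real.sqrt (A^2) := Real.sqrt_le_sqrt (by nlinarith)
        _ = A := by rw [Real.sqrt_sq hA0.le]
  -- off the pair, terms are just ftau τ
  have hoff : ∀ y ∈ ((Icc 1 k).erase y1).erase y2,
      Real.sqrt (ftau k m ε τ y * ftau k m ε σ y) = ftau k m ε τ y := by
    intro y hy
    have h2 := Finset.mem_of_mem_erase hy
    have hneq2 : y ≠ y2 := Finset.ne_of_mem_erase hy
    have hneq1 : y ≠ y1 := Finset.ne_of_mem_erase h2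
    rw [hσ, ftau_flip_eq j y hneq1 hneq2, Real.sqrt_mul_self
      (ftau_nonneg hτ hε hε1 hk y)]
  have hsum1 : ∑ y ∈ ((Icc 1 k).erase y1).erase y2, ftau k m ε τ y
      = 1 - ftau k m ε τ y2 - ftau k m ε τ y1 := by
    have := decomp (ftau k m ε τ)
    rw [sum_ftau h1 h2 hk] at this
    linarith
  have main : ∑ y ∈ Icc 1 k, Real.sqrt (ftau k m ε τ y * ftau k m ε σ y)
      = 1 - ftau k m ε τ y2 - ftau k m ε τ y1
        + Real.sqrt ((f0 k ε y2 - ε * τ j) * (f0 k ε y2 + ε * τ j))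
        + Real.sqrt ((f0 k ε y1 + ε * τ j) * (f0 k ε y1 - ε * τ j)) := by
    rw [decomp (fun y => Real.sqrt (ftau k m ε τ y * ftau k m ε σ y)),
      Finset.sum_congr rfl hoff, hsum1, hfty1, hfty2, hfsy1, hfsy2]
  have hc2 : (f0 k ε y2 - ε * τ j) * (f0 k ε y2 + ε * τ j)
      = (f0 k ε y2 + ε * τ j) * (f0 k ε y2 - ε * τ j) := by ring
  have s1 := sqrt_term (f0 k ε y1) hA.1 hA.2
  have s2 := sqrt_term (f0 k ε y2) hB.1 hB.2
  have e1 : ftau k m ε τ y1 = f0 k ε y1 + ε * τ j := hfty1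
  have e2 : ftau k m ε τ y2 = f0 k ε y2 - ε * τ j := hfty2
  constructor
  · rw [main, hc2, e1, e2]
    have := s1.1
    have := s2.1
    linarith
  · rw [main, hc2, e1, e2]
    have := s1.2
    have := s2.2
    linarith

lemma sum_W {f : ℕ → ℝ} (n : ℕ) (hf : ∑ y ∈ Icc 1 k, f y = 1) :
    ∑ x ∈ Fintype.piFinset (fun _ : Fin n => Icc 1 k), ∏ i, f (x i) = 1 := by
  rw [← Finset.prod_univ_sum]
  simp [hf]


lemma bc_prod (n : ℕ) (p q : ℕ → ℝ) (hp : ∀ y, 0 ≤ p y) (hq : ∀ y, 0 ≤ q y) :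
    ∑ x ∈ Fintype.piFinset (fun _ : Fin n => Icc 1 k),
        Real.sqrt ((∏ i, p (x i)) * (∏ i, q (x i)))
      = (∑ y ∈ Icc 1 k, Real.sqrt (p y * q y))^n := by
  have h : ∀ x : Fin n → ℕ, Real.sqrt ((∏ i, p (x i)) * (∏ i, q (x i)))
      = ∏ i, Real.sqrt (p (x i) * q (x i)) := by
    intro x
    rw [← Finset.prod_mul_distrib]
    exact sqrt_prod _ _ (fun i _ => mul_nonneg (hp (x i)) (hq (x i)))
  rw [Finset.sum_congr rfl (fun x _ => h x),
    show (∑ x ∈ Fintype.piFinset fun _ : Fin n => Icc 1 k, ∏ i, Real.sqrt (p (x i) * q (x i)))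
      = ∏ _i : Fin n, ∑ y ∈ Icc 1 k, Real.sqrt (p y * q y) from
      (Finset.prod_univ_sum (fun _ => Icc 1 k) (fun _ y => Real.sqrt (p y * q y))).symm]
  simp

end Construction

/-- Le Cam style: sum of min is at least 1 - sqrt(2 - 2 BC). -/
lemma lecam {α : Type*} (X : Finset α) (P Q : α → ℝ)
    (hP : ∀ x ∈ X, 0 ≤ P x) (hQ : ∀ x ∈ X, 0 ≤ Q x)
    (hsP : ∑ x ∈ X, P x = 1) (hsQ : ∑ x ∈ X, Q x = 1) :
    1 - Real.sqrt (2 - 2 * ∑ x ∈ X, Real.sqrt (P x * Q x)) ≤ ∑ x ∈ X, min (P x) (Q x) := by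
  set BC := ∑ x ∈ X, Real.sqrt (P x * Q x) with hBC_def
  have hBC1 : BC ≤ 1 := by
    rw [hBC_def]
    calc ∑ x ∈ X, Real.sqrt (P x * Q x) ≤ ∑ x ∈ X, (P x + Q x)/2 :=
          Finset.sum_le_sum (fun x hx => sqrt_mul_le_half _ _ (hP x hx) (hQ x hx))
      _ = 1 := by rw [← Finset.sum_div, Finset.sum_add_distrib, hsP, hsQ]; norm_num
  have key : ∀ x ∈ X, |P x - Q x|
      = |Real.sqrt (P x) - Real.sqrt (Q x)| * (Real.sqrt (P x) + Real.sqrt (Q x)) := by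
    intro x hx
    have e : P x - Q x
        = (Real.sqrt (P x) - Real.sqrt (Q x)) * (Real.sqrt (P x) + Real.sqrt (Q x)) := by
      have := Real.sq_sqrt (hP x hx)
      have := Real.sq_sqrt (hQ x hx)
      nlinarith
    have habs2 : |Real.sqrt (P x) + Real.sqrt (Q x)| = Real.sqrt (P x) + Real.sqrt (Q x) :=
      abs_of_nonneg (by positivity)
    rw [e, abs_mul, habs2]
  have e1 : ∑ x ∈ X, (|Real.sqrt (P x) - Real.sqrt (Q x)|)^2 = 2 - 2*BC := by
    have h : ∀ x ∈ X, (|Real.sqrt (P x) - Real.sqrt (Q x)|)^2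
        = P x + Q x - 2*Real.sqrt (P x * Q x) := by
      intro x hx
      rw [sq_abs, Real.sqrt_mul (hP x hx)]
      have := Real.sq_sqrt (hP x hx)
      have := Real.sq_sqrt (hQ x hx)
      nlinarith
    rw [Finset.sum_congr rfl h, Finset.sum_sub_distrib, Finset.sum_add_distrib, hsP, hsQ,
      ← Finset.mul_sum, ← hBC_def]
    ring
  have e2 : ∑ x ∈ X, (Real.sqrt (P x) + Real.sqrt (Q x))^2 ≤ 4 := by
    have h : ∀ x ∈ X, (Real.sqrt (P x) + Real.sqrt (Q x))^2
        = P x + Q x + 2*Real.sqrt (P x * Q x) := by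
      intro x hx
      rw [Real.sqrt_mul (hP x hx)]
      have := Real.sq_sqrt (hP x hx)
      have := Real.sq_sqrt (hQ x hx)
      nlinarith
    rw [Finset.sum_congr rfl h, Finset.sum_add_distrib, Finset.sum_add_distrib, hsP, hsQ,
      ← Finset.mul_sum, ← hBC_def]
    linarith
  have cs := Finset.sum_mul_sq_le_sq_mul_sq X
    (fun x => |Real.sqrt (P x) - Real.sqrt (Q x)|) (fun x => Real.sqrt (P x) + Real.sqrt (Q x))
  have hs_nonneg : 0 ≤ ∑ x ∈ X, |P x - Q x| := Finset.sum_nonneg (fun x _ => abs_nonneg _)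
  have hsq2 : (∑ x ∈ X, |P x - Q x|)^2 ≤ (2 - 2*BC) * 4 := by
    calc (∑ x ∈ X, |P x - Q x|)^2
        = (∑ x ∈ X, |Real.sqrt (P x) - Real.sqrt (Q x)| * (Real.sqrt (P x) + Real.sqrt (Q x)))^2 := by
          rw [Finset.sum_congr rfl key]
      _ ≤ (∑ x ∈ X, (|Real.sqrt (P x) - Real.sqrt (Q x)|)^2) *
          (∑ x ∈ X, (Real.sqrt (P x) + Real.sqrt (Q x))^2) := cs
      _ ≤ (2 - 2*BC) * 4 := by
          rw [e1]
          apply mul_le_mul_of_nonneg_left e2 (by linarith)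
  have habs : ∑ x ∈ X, |P x - Q x| ≤ 2 * Real.sqrt (2 - 2*BC) := by
    have h4 : 2 * Real.sqrt (2 - 2*BC) = Real.sqrt ((2-2*BC)*4) := by
      rw [Real.sqrt_mul (by linarith), show Real.sqrt 4 = 2 by
        rw [show (4:ℝ) = 2^2 by norm_num, Real.sqrt_sq (by norm_num)]]
      ring
    rw [h4]
    exact (Real.le_sqrt hs_nonneg (by nlinarith)).mpr hsq2
  have hminsum : ∑ x ∈ X, min (P x) (Q x) = 1 - (∑ x ∈ X, |P x - Q x|)/2 := by
    have h : ∀ x ∈ X, min (P x) (Q x) = (P x + Q x)/2 - |P x - Q x|/2 :=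
      fun x _ => min_eq_half _ _
    rw [Finset.sum_congr rfl h, Finset.sum_sub_distrib, ← Finset.sum_div, ← Finset.sum_div,
      Finset.sum_add_distrib, hsP, hsQ]
    norm_num
  rw [hminsum]
  linarith


lemma minsum {k m : ℕ} {ε : ℝ} {τ : Fin m → ℝ}
    (hτ : ∀ i, τ i = 1 ∨ τ i = -1) (hε : 0 ≤ ε)
    (hε1 : (k:ℝ)^2 * ε ≤ 4/5) (hε2 : (k:ℝ) * ε ≤ 1/5) (hk : 1 ≤ k) (h1 : 2*m ≤ k)
    (h2 : k ≤ 2*m+1) (n : ℕ) (j : Fin m) :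
    1 - 2*ε*Real.sqrt (5*(n:ℝ)*(k:ℝ)) ≤
      ∑ x ∈ Fintype.piFinset (fun _ : Fin n => Icc 1 k),
        min (∏ i, ftau k m ε τ (x i))
            (∏ i, ftau k m ε (Function.update τ j (-(τ j))) (x i)) := by
  have hτσ := flip_pm hτ j
  have hp := ftau_nonneg hτ hε hε1 hk
  have hq := ftau_nonneg hτσ hε hε1 hk
  have hlec := lecam (Fintype.piFinset (fun _ : Fin n => Icc 1 k))
    (fun x => ∏ i, ftau k m ε τ (x i))
    (fun x => ∏ i, ftau k m ε (Function.update τ j (-(τ j))) (x i))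
    (fun x _ => Finset.prod_nonneg (fun i _ => hp (x i)))
    (fun x _ => Finset.prod_nonneg (fun i _ => hq (x i)))
    (sum_W n (sum_ftau h1 h2 hk)) (sum_W n (sum_ftau h1 h2 hk))
  have hbc := bc_prod (k := k) n (ftau k m ε τ) (ftau k m ε (Function.update τ j (-(τ j)))) hp hq
  obtain ⟨hρlb, hρub⟩ := rho_bound hτ hε hε1 hε2 hk h1 h2 j
  set ρ := ∑ y ∈ Icc 1 k, Real.sqrt (ftau k m ε τ y *
    ftau k m ε (Function.update τ j (-(τ j))) y) with hρdef
  have hρ0 : 0 ≤ ρ := Finset.sum_nonneg (fun y _ => Real.sqrt_nonneg _)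
  have hBClb : 1 - (n:ℝ)*(10*(k:ℝ)*ε^2) ≤ ρ^n := by
    have hber := one_add_mul_le_pow (a := ρ - 1) (by nlinarith) n
    have h4 : (n:ℝ)*(1-ρ) ≤ (n:ℝ)*(10*(k:ℝ)*ε^2) :=
      mul_le_mul_of_nonneg_left (by linarith) (Nat.cast_nonneg n)
    calc 1 - (n:ℝ)*(10*(k:ℝ)*ε^2) ≤ 1 - (n:ℝ)*(1-ρ) := by linarith
      _ = 1 + (n:ℝ)*(ρ-1) := by ring
      _ ≤ (1 + (ρ-1))^n := hber
      _ = ρ^n := by ring_nf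
  have hsqrt : Real.sqrt (2 - 2 * ρ^n) ≤ 2*ε*Real.sqrt (5*(n:ℝ)*(k:ℝ)) := by
    have h5 : 2 - 2*ρ^n ≤ 20*(n:ℝ)*(k:ℝ)*ε^2 := by nlinarith
    calc Real.sqrt (2 - 2*ρ^n) ≤ Real.sqrt (20*(n:ℝ)*(k:ℝ)*ε^2) := Real.sqrt_le_sqrt h5
      _ = 2*ε*Real.sqrt (5*(n:ℝ)*(k:ℝ)) := by
        rw [show 20*(n:ℝ)*(k:ℝ)*ε^2 = (2*ε)^2 * (5*(n:ℝ)*(k:ℝ)) by ring,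
          Real.sqrt_mul (by positivity), Real.sqrt_sq (by linarith)]
  rw [hbc] at hlec
  calc 1 - 2*ε*Real.sqrt (5*(n:ℝ)*(k:ℝ)) ≤ 1 - Real.sqrt (2 - 2 * ρ^n) := by linarith
    _ ≤ _ := hlec

lemma risk_ge (n k : ℕ) (φ : (Fin n → ℕ) → ℕ → ℝ) (f : ℕ → ℝ) (hf : f ∈ Fk k) :
    (∑ x ∈ Fintype.piFinset (fun _ : Fin n => Finset.Icc 1 k),
      (∏ i, f (x i)) * TVk k (φ x) f) ≤ risk n k φ (Fk k) := by
  classical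
  set X := Fintype.piFinset (fun _ : Fin n => Finset.Icc 1 k) with hX
  set G : (ℕ → ℝ) → ℝ := fun g => ∑ x ∈ X, (∏ i, g (x i)) * TVk k (φ x) g with hG
  set M : ℝ := ∑ x ∈ X, (∑ y ∈ Icc 1 k, |φ x y| + 1)/2 with hM
  have hGM : ∀ g, g ∈ Fk k → G g ≤ M := by
    intro g hg
    obtain ⟨hg0, hgs, hg1, _⟩ := hg
    apply Finset.sum_le_sum
    intro x hx
    have hprod0 : 0 ≤ ∏ i, g (x i) := Finset.prod_nonneg (fun i _ => hg0 (x i))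
    have hprod1 : ∏ i, g (x i) ≤ 1 := by
      apply Finset.prod_le_one (fun i _ => hg0 (x i))
      intro i _
      have hxi : x i ∈ Icc 1 k := (Fintype.mem_piFinset.mp hx) i
      calc g (x i) ≤ ∑ y ∈ Icc 1 k, g y := Finset.single_le_sum (fun y _ => hg0 y) hxi
        _ = 1 := hg1
    have htv0 : 0 ≤ TVk k (φ x) g := by
      rw [TVk]
      positivity
    have habs2 : ∑ y ∈ Icc 1 k, |φ x y - g y| ≤ ∑ y ∈ Icc 1 k, |φ x y| + 1 := by
      calc ∑ y ∈ Icc 1 k, |φ x y - g y| ≤ ∑ y ∈ Icc 1 k, (|φ x y| + |g y|) :=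
          Finset.sum_le_sum (fun y _ => abs_sub _ _)
        _ = ∑ y ∈ Icc 1 k, |φ x y| + ∑ y ∈ Icc 1 k, g y := by
          rw [Finset.sum_add_distrib]
          congr 1
          exact Finset.sum_congr rfl (fun y _ => abs_of_nonneg (hg0 y))
        _ = ∑ y ∈ Icc 1 k, |φ x y| + 1 := by rw [hg1]
    have htv : TVk k (φ x) g ≤ (∑ y ∈ Icc 1 k, |φ x y| + 1)/2 := by
      rw [TVk]
      linarith
    calc (∏ i, g (x i)) * TVk k (φ x) g ≤ 1 * TVk k (φ x) g :=
        mul_le_mul_of_nonneg_right hprod1 htv0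
      _ = TVk k (φ x) g := one_mul _
      _ ≤ _ := htv
  have hbdd : BddAbove (Set.range fun g => ⨆ _ : g ∈ Fk k, G g) := by
    refine ⟨max M 0, ?_⟩
    rintro _ ⟨g, rfl⟩
    by_cases hg : g ∈ Fk k
    · show (⨆ _ : g ∈ Fk k, G g) ≤ max M 0
      rw [ciSup_pos hg]
      exact le_max_of_le_left (hGM g hg)
    · show (⨆ _ : g ∈ Fk k, G g) ≤ max M 0
      rw [ciSup_neg hg, Real.sSup_empty]
      exact le_max_right _ _
  rw [risk]
  refine le_ciSup_of_le hbdd f ?_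
  show _ ≤ (⨆ _ : f ∈ Fk k, G f)
  rw [ciSup_pos hf]

lemma card_pm : ({(-1:ℝ), 1} : Finset ℝ).card = 2 := by
  rw [Finset.card_insert_of_notMem (by norm_num), Finset.card_singleton]

/-- core averaging bound: for any estimator, sum over hypercube of risks is large -/
lemma sum_G_lb (n k m : ℕ) (ε : ℝ) (hε : 0 ≤ ε)
    (hε1 : (k:ℝ)^2 * ε ≤ 4/5) (hε2 : (k:ℝ) * ε ≤ 1/5) (hk : 1 ≤ k) (h1 : 2*m ≤ k)
    (h2 : k ≤ 2*m+1) (φ : (Fin n → ℕ) → ℕ → ℝ) :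
    (2^m : ℝ) * (ε * m * (1 - 2*ε*Real.sqrt (5*(n:ℝ)*(k:ℝ)))/2) ≤
      ∑ τ ∈ Fintype.piFinset (fun _ : Fin m => ({(-1:ℝ), 1} : Finset ℝ)),
        ∑ x ∈ Fintype.piFinset (fun _ : Fin n => Finset.Icc 1 k),
          (∏ i, ftau k m ε τ (x i)) * TVk k (φ x) (ftau k m ε τ) := by
  classical
  set B := Fintype.piFinset (fun _ : Fin m => ({(-1:ℝ), 1} : Finset ℝ)) with hB
  set X := Fintype.piFinset (fun _ : Fin n => Finset.Icc 1 k) with hX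
  have hmem : ∀ τ ∈ B, ∀ i, τ i = 1 ∨ τ i = -1 := by
    intro τ hτ i
    have := (Fintype.mem_piFinset.mp hτ) i
    rw [Finset.mem_insert, Finset.mem_singleton] at this
    tauto
  have hcard : (B.card : ℝ) = 2^m := by
    rw [hB, Fintype.card_piFinset]
    simp [card_pm]
  -- step 1 : bound each G from below by the error sum
  have step1 : ∀ τ ∈ B,
      ∑ x ∈ X, (∏ i, ftau k m ε τ (x i)) * (ε * ∑ j : Fin m, err ε (φ x) (τ j) (j:ℕ)) ≤
      ∑ x ∈ X, (∏ i, ftau k m ε τ (x i)) * TVk k (φ x) (ftau k m ε τ) := by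
    intro τ hτ
    apply Finset.sum_le_sum
    intro x _
    have hW : 0 ≤ ∏ i, ftau k m ε τ (x i) :=
      Finset.prod_nonneg (fun i _ => ftau_nonneg (hmem τ hτ) hε hε1 hk (x i))
    exact mul_le_mul_of_nonneg_left (tv_lb k m (hmem τ hτ) hε h1 (φ x)) hW
  -- step 2 : per bit j, the average error is at least (1-u)/2
  have step2 : ∀ j : Fin m,
      (2^m : ℝ) * ((1 - 2*ε*Real.sqrt (5*(n:ℝ)*(k:ℝ)))/2) ≤
        ∑ τ ∈ B, ∑ x ∈ X, (∏ i, ftau k m ε τ (x i)) * err ε (φ x) (τ j) (j:ℕ) := by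
    intro j
    set Φ : (Fin m → ℝ) → (Fin m → ℝ) := fun τ => Function.update τ j (-(τ j)) with hΦ
    set h : (Fin m → ℝ) → ℝ := fun τ =>
      ∑ x ∈ X, (∏ i, ftau k m ε τ (x i)) * err ε (φ x) (τ j) (j:ℕ) with hh
    have hΦB : ∀ τ ∈ B, Φ τ ∈ B := by
      intro τ hτ
      rw [Fintype.mem_piFinset]
      intro i
      rcases eq_or_ne i j with rfl | hne
      · rw [hΦ]
        simp only [Function.update_self]
        rcases hmem τ hτ i with h3 | h3 <;> rw [h3] <;> norm_num
      · rw [hΦ]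
        simp only [Function.update_of_ne hne]
        exact (Fintype.mem_piFinset.mp hτ) i
    have hΦΦ : ∀ τ, Φ (Φ τ) = τ := by
      intro τ
      rw [hΦ]
      simp only [Function.update_self, Function.update_idem, neg_neg, Function.update_eq_self]
    have hflip : ∑ τ ∈ B, h τ = ∑ τ ∈ B, h (Φ τ) :=
      Finset.sum_nbij' Φ Φ hΦB hΦB (fun τ _ => hΦΦ τ) (fun τ _ => hΦΦ τ)
        (fun τ hτ => by rw [hΦΦ τ])
    have hpair : ∀ τ ∈ B, 1 - 2*ε*Real.sqrt (5*(n:ℝ)*(k:ℝ)) ≤ h τ + h (Φ τ) := by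
      intro τ hτ
      have hτpm := hmem τ hτ
      have hσpm := hmem (Φ τ) (hΦB τ hτ)
      have hτj : (Φ τ) j = -(τ j) := by rw [hΦ]; simp
      have hmin := minsum (k := k) (m := m) hτpm hε hε1 hε2 hk h1 h2 n j
      have hterm : ∀ x ∈ X,
          min (∏ i, ftau k m ε τ (x i)) (∏ i, ftau k m ε (Φ τ) (x i)) ≤
          (∏ i, ftau k m ε τ (x i)) * err ε (φ x) (τ j) (j:ℕ) +
          (∏ i, ftau k m ε (Φ τ) (x i)) * err ε (φ x) ((Φ τ) j) (j:ℕ) := by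
        intro x _
        have hWτ : 0 ≤ ∏ i, ftau k m ε τ (x i) :=
          Finset.prod_nonneg (fun i _ => ftau_nonneg hτpm hε hε1 hk (x i))
        have hWσ : 0 ≤ ∏ i, ftau k m ε (Φ τ) (x i) :=
          Finset.prod_nonneg (fun i _ => ftau_nonneg hσpm hε hε1 hk (x i))
        rw [hτj]
        rw [err, err]
        have hτj0 : τ j ≠ -(τ j) := by
          rcases hτpm j with h3 | h3 <;> rw [h3] <;> norm_num
        by_cases hc : tst ε (φ x) (j:ℕ) = τ j
        · rw [if_pos hc, if_neg (by rw [hc]; exact hτj0), mul_zero, mul_one, zero_add]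
          exact min_le_right _ _
        · rw [if_neg hc, mul_one]
          have := mul_nonneg hWσ (by positivity :
            (0:ℝ) ≤ if tst ε (φ x) (j:ℕ) = -(τ j) then 0 else 1)
          calc min (∏ i, ftau k m ε τ (x i)) (∏ i, ftau k m ε (Φ τ) (x i)) ≤
              ∏ i, ftau k m ε τ (x i) := min_le_left _ _
            _ ≤ _ := by linarith
      have : 1 - 2*ε*Real.sqrt (5*(n:ℝ)*(k:ℝ)) ≤
          ∑ x ∈ X, ((∏ i, ftau k m ε τ (x i)) * err ε (φ x) (τ j) (j:ℕ) +
            (∏ i, ftau k m ε (Φ τ) (x i)) * err ε (φ x) ((Φ τ) j) (j:ℕ)) := by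
        calc 1 - 2*ε*Real.sqrt (5*(n:ℝ)*(k:ℝ)) ≤
            ∑ x ∈ X, min (∏ i, ftau k m ε τ (x i)) (∏ i, ftau k m ε (Φ τ) (x i)) := by
              rw [hΦ] at *
              exact hmin
          _ ≤ _ := Finset.sum_le_sum hterm
      rw [hh]
      simp only
      rw [← Finset.sum_add_distrib]
      exact this
    have hdouble : (2:ℝ) * ∑ τ ∈ B, h τ = ∑ τ ∈ B, (h τ + h (Φ τ)) := by
      rw [Finset.sum_add_distrib, ← hflip]
      ring
    have : (B.card : ℝ) * (1 - 2*ε*Real.sqrt (5*(n:ℝ)*(k:ℝ))) ≤ 2 * ∑ τ ∈ B, h τ := by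
      rw [hdouble]
      calc (B.card : ℝ) * (1 - 2*ε*Real.sqrt (5*(n:ℝ)*(k:ℝ)))
          = ∑ _τ ∈ B, (1 - 2*ε*Real.sqrt (5*(n:ℝ)*(k:ℝ))) := by
            rw [Finset.sum_const, nsmul_eq_mul]
        _ ≤ _ := Finset.sum_le_sum hpair
    rw [hcard] at this
    rw [hh] at this
    simp only at this
    linarith
  -- step 3 : combine
  have swap : ∀ τ ∈ B,
      ∑ x ∈ X, (∏ i, ftau k m ε τ (x i)) * (ε * ∑ j : Fin m, err ε (φ x) (τ j) (j:ℕ))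
      = ε * ∑ j : Fin m, ∑ x ∈ X, (∏ i, ftau k m ε τ (x i)) * err ε (φ x) (τ j) (j:ℕ) := by
    intro τ _
    calc ∑ x ∈ X, (∏ i, ftau k m ε τ (x i)) * (ε * ∑ j : Fin m, err ε (φ x) (τ j) (j:ℕ))
        = ∑ x ∈ X, ∑ j : Fin m, ε * ((∏ i, ftau k m ε τ (x i)) * err ε (φ x) (τ j) (j:ℕ)) :=
          Finset.sum_congr rfl (fun x _ => by
            rw [Finset.mul_sum, Finset.mul_sum]
            exact Finset.sum_congr rfl (fun j _ => by ring))
      _ = ∑ j : Fin m, ∑ x ∈ X, ε * ((∏ i, ftau k m ε τ (x i)) * err ε (φ x) (τ j) (j:ℕ)) :=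
          Finset.sum_comm
      _ = ε * ∑ j : Fin m, ∑ x ∈ X, (∏ i, ftau k m ε τ (x i)) * err ε (φ x) (τ j) (j:ℕ) := by
          rw [Finset.mul_sum]
          exact Finset.sum_congr rfl (fun j _ => (Finset.mul_sum _ _ _).symm)
  calc (2^m : ℝ) * (ε * m * (1 - 2*ε*Real.sqrt (5*(n:ℝ)*(k:ℝ)))/2)
      = ε * ∑ _j : Fin m, (2^m : ℝ) * ((1 - 2*ε*Real.sqrt (5*(n:ℝ)*(k:ℝ)))/2) := by
        rw [Finset.sum_const, Finset.card_univ, Fintype.card_fin, nsmul_eq_mul]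
        ring
    _ ≤ ε * ∑ j : Fin m, ∑ τ ∈ B, ∑ x ∈ X,
          (∏ i, ftau k m ε τ (x i)) * err ε (φ x) (τ j) (j:ℕ) :=
        mul_le_mul_of_nonneg_left (Finset.sum_le_sum (fun j _ => step2 j)) hε
    _ = ∑ τ ∈ B, ∑ x ∈ X, (∏ i, ftau k m ε τ (x i)) *
          (ε * ∑ j : Fin m, err ε (φ x) (τ j) (j:ℕ)) := by
        rw [Finset.sum_congr rfl swap, ← Finset.mul_sum]
        congr 1
        exact Finset.sum_comm
    _ ≤ _ := Finset.sum_le_sum step1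

lemma minimax_lb (n k m : ℕ) (ε : ℝ) (hε : 0 ≤ ε)
    (hε1 : (k:ℝ)^2 * ε ≤ 4/5) (hε2 : (k:ℝ) * ε ≤ 1/5) (hk : 1 ≤ k) (h1 : 2*m ≤ k)
    (h2 : k ≤ 2*m+1) :
    ε * m * (1 - 2*ε*Real.sqrt (5*(n:ℝ)*(k:ℝ)))/2 ≤ minimaxRisk n k (Fk k) := by
  rw [minimaxRisk]
  apply le_ciInf
  intro φ
  have hG := sum_G_lb n k m ε hε hε1 hε2 hk h1 h2 φ
  set B := Fintype.piFinset (fun _ : Fin m => ({(-1:ℝ), 1} : Finset ℝ)) with hB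
  have hmem : ∀ τ ∈ B, ∀ i, τ i = 1 ∨ τ i = -1 := by
    intro τ hτ i
    have := (Fintype.mem_piFinset.mp hτ) i
    rw [Finset.mem_insert, Finset.mem_singleton] at this
    tauto
  have hcard : (B.card : ℝ) = 2^m := by
    rw [hB, Fintype.card_piFinset]
    simp [card_pm]
  have hle : ∑ τ ∈ B, ∑ x ∈ Fintype.piFinset (fun _ : Fin n => Finset.Icc 1 k),
      (∏ i, ftau k m ε τ (x i)) * TVk k (φ x) (ftau k m ε τ)
      ≤ (B.card : ℝ) * risk n k φ (Fk k) := by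
    calc _ ≤ ∑ _τ ∈ B, risk n k φ (Fk k) := Finset.sum_le_sum (fun τ hτ =>
          risk_ge n k φ (ftau k m ε τ) (ftau_mem (hmem τ hτ) hε hε1 hk h1 h2))
      _ = (B.card : ℝ) * risk n k φ (Fk k) := by rw [Finset.sum_const, nsmul_eq_mul]
  rw [hcard] at hle
  have h2m : (0:ℝ) < 2^m := by positivity
  nlinarith [le_trans hG hle]

lemma sqrt5_le : Real.sqrt 5 ≤ 9/4 := by
  rw [show (9/4:ℝ) = Real.sqrt ((9/4)^2) from (Real.sqrt_sq (by norm_num)).symm]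
  exact Real.sqrt_le_sqrt (by norm_num)

lemma exp12_ge : (256:ℝ) ≤ Real.exp 12 := by
  have h3 : (4:ℝ) ≤ Real.exp 3 := by
    have := Real.add_one_le_exp (3:ℝ)
    linarith
  have h12 : Real.exp 12 = (Real.exp 3)^4 := by
    rw [← Real.exp_nat_mul]
    norm_num
  rw [h12]
  calc (256:ℝ) = 4^4 := by norm_num
    _ ≤ (Real.exp 3)^4 := pow_le_pow_left₀ (by norm_num) h3 4

lemma k_le_25n (n k : ℕ) (hn : 1 ≤ n) (hk : 2 ≤ k) (hc : k^3 ≤ 400*n) : k ≤ 25*n := by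
  rcases le_or_gt k 25 with h | h
  · omega
  · have h26 : 26 ≤ k := h
    have e1 : 26*26 ≤ k*k := Nat.mul_le_mul h26 h26
    have e2 : (26*26)*k ≤ (k*k)*k := Nat.mul_le_mul_right k e1
    have e4 : 676*k ≤ 400*n := by
      calc 676*k = (26*26)*k := by norm_num
        _ ≤ (k*k)*k := e2
        _ = k^3 := by ring
        _ ≤ 400*n := hc
    omega

lemma cube_bound (n k : ℕ) (hk1 : (k : ℝ) ≤ Real.exp 8 * (n : ℝ) ^ ((1 : ℝ) / 3)) :
    (k:ℝ)^3 ≤ (Real.exp 12)^2 * n := by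
  have hn0 : (0:ℝ) ≤ n := Nat.cast_nonneg n
  have h1 : (k:ℝ)^3 ≤ (Real.exp 8 * (n : ℝ) ^ ((1 : ℝ) / 3))^3 :=
    pow_le_pow_left₀ (Nat.cast_nonneg k) hk1 3
  have h2 : ((n : ℝ) ^ ((1 : ℝ) / 3))^3 = n := by
    rw [← Real.rpow_natCast ((n:ℝ) ^ ((1:ℝ)/3)) 3, ← Real.rpow_mul hn0]
    norm_num
  have h3 : (Real.exp 8)^3 = (Real.exp 12)^2 := by
    rw [← Real.exp_nat_mul, ← Real.exp_nat_mul]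
    norm_num
  calc (k:ℝ)^3 ≤ (Real.exp 8 * (n : ℝ) ^ ((1 : ℝ) / 3))^3 := h1
    _ = (Real.exp 8)^3 * ((n : ℝ) ^ ((1 : ℝ) / 3))^3 := by ring
    _ = (Real.exp 12)^2 * n := by rw [h2, h3]

end Stmt19

set_option maxHeartbeats 1000000 in
/-- **Lower bound in Theorem 2.1, small-`k` regime**: if `n` and `k` are positive
integers with `2 ≤ k ≤ e^8 n^{1/3}`, then `R_n(F_k) ≥ (1/(8 e^{12})) √(k/n)`. -/
theorem stmt19 (n k : ℕ) (hn : 1 ≤ n) (hk : 2 ≤ k)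
    (hk1 : (k : ℝ) ≤ Real.exp 8 * (n : ℝ) ^ ((1 : ℝ) / 3)) :
    (1 / (8 * Real.exp 12)) * Real.sqrt ((k : ℝ) / n) ≤ minimaxRisk n k (Fk k) := by
  have hn0 : (0:ℝ) < n := by exact_mod_cast hn
  have hk0 : (0:ℝ) < k := by exact_mod_cast (by omega : 0 < k)
  set m := k/2 with hm
  have h1 : 2*m ≤ k := by omega
  have h2 : k ≤ 2*m+1 := by omega
  have hm3 : (k:ℝ) ≤ 3*(m:ℝ) := by exact_mod_cast (by omega : k ≤ 3*(k/2))
  have hm0 : (0:ℝ) < m := by exact_mod_cast (by omega : 0 < k/2)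
  have hk1n : 1 ≤ k := by omega
  have hE := Stmt19.exp12_ge
  have hE0 : (0:ℝ) < Real.exp 12 := Real.exp_pos _
  have h5 := Stmt19.sqrt5_le
  have h50 : (0:ℝ) ≤ Real.sqrt 5 := Real.sqrt_nonneg _
  have hnk0 : (0:ℝ) < (n:ℝ)*(k:ℝ) := by positivity
  set S := Real.sqrt ((n:ℝ)*(k:ℝ)) with hS
  have hS0 : 0 < S := Real.sqrt_pos.mpr hnk0
  have hS2 : S^2 = (n:ℝ)*k := Real.sq_sqrt hnk0.le
  have h5nk : Real.sqrt (5*(n:ℝ)*(k:ℝ)) = Real.sqrt 5 * S := by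
    rw [hS, ← Real.sqrt_mul (by norm_num : (0:ℝ) ≤ 5), mul_assoc]
  have hRS : Real.sqrt ((k:ℝ)/n) * S = k := by
    rw [hS, ← Real.sqrt_mul (by positivity),
      show (k:ℝ)/n * ((n:ℝ)*k) = (k:ℝ)^2 by field_simp,
      Real.sqrt_sq hk0.le]
  have hRn : (0:ℝ) ≤ Real.sqrt ((k:ℝ)/n) := Real.sqrt_nonneg _
  have hkS : Real.sqrt ((k:ℝ)/n) = (k:ℝ)/S := by
    rw [eq_div_iff hS0.ne']
    exact hRS
  by_cases hcase : k^3 ≤ 400*n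
  · -- dense case : ε = 1/(25 √(nk))
    set ε := 1/(25*S) with hεdef
    have hε0 : (0:ℝ) ≤ ε := by positivity
    have hc3 : (k:ℝ)^3 ≤ 400*n := by exact_mod_cast hcase
    have hsq : (k:ℝ)^2 ≤ 20*S := by
      nlinarith [hS2, hS0, hk0]
    have hε1 : (k:ℝ)^2 * ε ≤ 4/5 := by
      rw [hεdef, show (k:ℝ)^2 * (1/(25*S)) = (k:ℝ)^2/(25*S) by ring,
        div_le_div_iff₀ (by positivity) (by norm_num)]
      nlinarith [hsq, hS0]
    have h25 : (k:ℝ) ≤ 25*n := by exact_mod_cast Stmt19.k_le_25n n k hn hk hcase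
    have hklin : (k:ℝ) ≤ 5*S := by
      nlinarith [hS2, hS0, hk0]
    have hε2 : (k:ℝ) * ε ≤ 1/5 := by
      rw [hεdef, show (k:ℝ) * (1/(25*S)) = (k:ℝ)/(25*S) by ring,
        div_le_div_iff₀ (by positivity) (by norm_num)]
      nlinarith [hklin, hS0]
    have hLB := Stmt19.minimax_lb n k m ε hε0 hε1 hε2 hk1n h1 h2
    refine le_trans ?_ hLB
    have hu : 2*ε*Real.sqrt (5*(n:ℝ)*(k:ℝ)) = 2*Real.sqrt 5/25 := by
      rw [h5nk, hεdef]
      field_simp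
    rw [hu]
    have hfrac : (4/5:ℝ) ≤ 1 - 2*Real.sqrt 5/25 := by nlinarith
    calc (1/(8*Real.exp 12)) * Real.sqrt ((k:ℝ)/n)
        ≤ (2/375) * Real.sqrt ((k:ℝ)/n) := by
          apply mul_le_mul_of_nonneg_right ?_ hRn
          rw [div_le_div_iff₀ (by positivity) (by norm_num)]
          nlinarith [hE]
      _ ≤ ε*(m:ℝ)*(1 - 2*Real.sqrt 5/25)/2 := by
          rw [hkS, hεdef,
            show (2/375:ℝ) * ((k:ℝ)/S) = (2*(k:ℝ)/375)/S by ring,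
            show (1/(25*S))*(m:ℝ)*(1 - 2*Real.sqrt 5/25)/2
              = ((m:ℝ)*(1 - 2*Real.sqrt 5/25)/50)/S by ring,
            div_le_div_iff_of_pos_right hS0]
          nlinarith [mul_le_mul (by linarith [hm3] : (k:ℝ)/3 ≤ (m:ℝ)) hfrac
            (by norm_num) hm0.le]
  · -- sparse case : ε = 4/(5k²)
    push_neg at hcase
    have hc3 : (400:ℝ)*n ≤ (k:ℝ)^3 := by exact_mod_cast (le_of_lt hcase)
    have hk8 : 8 ≤ k := by
      by_contra hc
      push_neg at hc
      interval_cases k <;> omega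
    set ε := 4/(5*(k:ℝ)^2) with hεdef
    have hε0 : (0:ℝ) ≤ ε := by positivity
    have hε1 : (k:ℝ)^2 * ε ≤ 4/5 := by
      rw [hεdef]
      rw [show (k:ℝ)^2 * (4/(5*(k:ℝ)^2)) = 4/5 * ((k:ℝ)^2/(k:ℝ)^2) by ring,
        div_self (by positivity), mul_one]
    have hk8r : (8:ℝ) ≤ k := by exact_mod_cast hk8
    have hε2 : (k:ℝ) * ε ≤ 1/5 := by
      rw [hεdef, show (k:ℝ) * (4/(5*(k:ℝ)^2)) = (4*(k:ℝ))/(5*(k:ℝ)^2) by ring,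
        div_le_div_iff₀ (by positivity) (by norm_num)]
      nlinarith
    have hLB := Stmt19.minimax_lb n k m ε hε0 hε1 hε2 hk1n h1 h2
    refine le_trans ?_ hLB
    -- set up T
    set T := Real.sqrt ((n:ℝ)/(k:ℝ)^3) with hT
    have hT0 : 0 < T := Real.sqrt_pos.mpr (by positivity)
    have hT2 : T^2 = (n:ℝ)/(k:ℝ)^3 := Real.sq_sqrt (by positivity)
    have hT2' : T^2 ≤ 1/400 := by
      rw [hT2, div_le_div_iff₀ (by positivity) (by norm_num)]
      linarith
    have hTle : T ≤ 1/20 := by nlinarith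
    have hk3E := Stmt19.cube_bound n k hk1
    have hET : 1 ≤ Real.exp 12 * T := by
      have hsq1 : 1 ≤ (Real.exp 12 * T)^2 := by
        rw [mul_pow, hT2, mul_div_assoc']
        rw [le_div_iff₀ (by positivity)]
        linarith
      nlinarith [mul_nonneg hE0.le hT0.le]
    have hSkT : S = (k:ℝ)^2*T := by
      have hsq2 : ((k:ℝ)^2*T)^2 = (n:ℝ)*k := by
        rw [mul_pow, hT2]
        field_simp
      rw [hS, ← hsq2, Real.sqrt_sq (by positivity)]
    set c := 8/5*Real.sqrt 5 with hc
    have hc0 : (0:ℝ) ≤ c := by positivity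
    have hc45 : c ≤ 18/5 := by rw [hc]; nlinarith
    have hu : 2*ε*Real.sqrt (5*(n:ℝ)*(k:ℝ)) = c*T := by
      rw [h5nk, hSkT, hεdef, hc]
      field_simp
      ring
    rw [hu]
    -- core numeric inequality
    set E := Real.exp 12 with hEdef
    set w := 1/E with hw
    have hw0 : 0 < w := by positivity
    have hEw : E*w = 1 := by rw [hw]; field_simp
    have hwle : w ≤ 1/256 := by
      rw [hw, div_le_div_iff₀ hE0 (by norm_num)]
      linarith
    have hTw : w ≤ T := by
      rw [hw, div_le_iff₀ hE0]
      linarith [hET]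
    have hcT : c*T ≤ 9/50 := by
      calc c*T ≤ (18/5)*(1/20) := mul_le_mul hc45 hTle hT0.le (by norm_num)
        _ = 9/50 := by norm_num
    have hcw : c*w ≤ (18/5)*(1/256) := mul_le_mul hc45 hwle hw0.le (by norm_num)
    have hfac : (0:ℝ) ≤ 1 - c*T - c*w := by linarith
    have e2 : 16*E*T - 16*c*E*T^2
        = 16*E*(T-w)*(1-c*T-c*w) + 16 - 16*c*w := by
      linear_combination (16 - 16*c*w) * hEw
    have hterm : (0:ℝ) ≤ 16*E*(T-w)*(1-c*T-c*w) :=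
      mul_nonneg (mul_nonneg (by positivity) (by linarith)) hfac
    have core : 15 ≤ 16*E*T*(1-c*T) := by
      have hexp : 16*E*T*(1-c*T) = 16*E*T - 16*c*E*T^2 := by ring
      rw [hexp]
      linarith
    have hprod : Real.sqrt ((k:ℝ)/n) * T = 1/(k:ℝ) := by
      rw [hT, ← Real.sqrt_mul (by positivity),
        show (k:ℝ)/n*((n:ℝ)/(k:ℝ)^3) = (1/(k:ℝ))^2 by field_simp,
        Real.sqrt_sq (by positivity)]
    have hsqkn : Real.sqrt ((k:ℝ)/n) = 1/((k:ℝ)*T) := by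
      rw [eq_div_iff (by positivity : ((k:ℝ)*T) ≠ 0)]
      calc Real.sqrt ((k:ℝ)/n) * ((k:ℝ)*T) = (Real.sqrt ((k:ℝ)/n) * T) * k := by ring
        _ = (1/(k:ℝ))*k := by rw [hprod]
        _ = 1 := by field_simp
    have key : 5*(k:ℝ) ≤ 16*E*(m:ℝ)*T*(1-c*T) := by
      have h15 : 15*(m:ℝ) ≤ (m:ℝ)*(16*E*T*(1-c*T)) := by
        calc 15*(m:ℝ) = (m:ℝ)*15 := by ring
          _ ≤ _ := mul_le_mul_of_nonneg_left core hm0.le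
      have h16 : (m:ℝ)*(16*E*T*(1-c*T)) = 16*E*(m:ℝ)*T*(1-c*T) := by ring
      linarith [hm3]
    rw [hsqkn, hεdef,
      show (1/(8*E))*(1/((k:ℝ)*T)) = 1/(8*E*(k:ℝ)*T) by ring,
      show 4/(5*(k:ℝ)^2)*(m:ℝ)*(1-c*T)/2 = (2*(m:ℝ)*(1-c*T))/(5*(k:ℝ)^2) by ring,
      div_le_div_iff₀ (by positivity) (by positivity)]
    calc (1:ℝ)*(5*(k:ℝ)^2) = (k:ℝ)*(5*(k:ℝ)) := by ring
      _ ≤ (k:ℝ)*(16*E*(m:ℝ)*T*(1-c*T)) := mul_le_mul_of_nonneg_left key hk0.le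
      _ = 2*(m:ℝ)*(1-c*T)*(8*E*(k:ℝ)*T) := by ring
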